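/- For every integer m ≥ 1, W̃_{2m+4}(p) − W̃_{2m+3}(p) = p^m q^m [ d_{m,0} p^4 − d_{m,1} p^3 q + (d_{m,0} + 3 d_{m,1} + d_{m,2}) p^2 q^2 − (2 d_{m,0} + 2 d_{m,1} + d_{m,2}) p q^3 − (d_{m,0} + d_{m,1}) q^4 ], where d_{m,j} := C(2m, m+j) − C(2m, m+j+1). -/

import Mathlib

open Finset

/-- Probability weight of a single path of length `N`. -/
noncomputable def pathProb (p : ℝ) (N : ℕ) (x : Fin N → Bool) : ℝ :=
  p ^ (Finset.univ.filter (fun i => x i = true)).card *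
    (1 - p) ^ (N - (Finset.univ.filter (fun i => x i = true)).card)

open Classical in
/-- Probability of an event `E` for the `N`-step Bernoulli walk. -/
noncomputable def walkProb (p : ℝ) (N : ℕ) (E : Set (Fin N → Bool)) : ℝ :=
  ∑ x : Fin N → Bool, if x ∈ E then pathProb p N x else 0

/-- Partial sum `S_j` of the walk given by the path `x`. -/
def walkS (N : ℕ) (x : Fin N → Bool) (j : ℕ) : ℤ :=
  ∑ i ∈ Finset.univ.filter (fun i : Fin N => (i : ℕ) < j), (if x i then (1 : ℤ) else -1)

/-- Running maximum `M_N = max_{0 ≤ j ≤ N} S_j`. -/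
def walkM (N : ℕ) (x : Fin N → Bool) : ℤ :=
  (Finset.range (N + 1)).sup' Finset.nonempty_range_add_one (fun j => walkS N x j)

/-- `U_n(p) = P(M_n ≤ 1)`. -/
noncomputable def U (n : ℕ) (p : ℝ) : ℝ :=
  walkProb p n {x | walkM n x ≤ 1}

/-- The polynomials `Δπ_{3,k}` for `k = 0,…,4` (and `0` for `k ≥ 5`). -/
noncomputable def deltaPi3 (p : ℝ) : ℕ → ℝ
  | 0 => p ^ 3
  | 1 => -(p ^ 2 * (1 - p)) + 2 * p * (1 - p) ^ 2 + (1 - p) ^ 3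
  | 2 => -(p ^ 3) + 2 * p ^ 2 * (1 - p) + p * (1 - p) ^ 2
  | 3 => p ^ 2 * (1 - p)
  | 4 => p ^ 3
  | _ => 0

/-- `W̃_n(p) = Σ_{k=0}^{4} P(max(1, M_{n−3}) − S_{n−3} ≤ k) · Δπ_{3,k}`. -/
noncomputable def Wt (n : ℕ) (p : ℝ) : ℝ :=
  ∑ k ∈ Finset.range 5,
    walkProb p (n - 3) {x | max 1 (walkM (n - 3) x) - walkS (n - 3) x (n - 3) ≤ (k : ℤ)} *
      deltaPi3 p k

/-- `d_{m,j} = C(2m, m+j) − C(2m, m+j+1)`, as a real number. -/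
noncomputable def dCoef (m j : ℕ) : ℝ :=
  ((2 * m).choose (m + j) : ℝ) - ((2 * m).choose (m + j + 1) : ℝ)

namespace WtAux

def vstep (b : Bool) : ℤ := if b then 1 else -1

lemma walkS_eq (N : ℕ) (x : Fin N → Bool) (j : ℕ) :
    walkS N x j = ∑ i : Fin N, if (i : ℕ) < j then vstep (x i) else 0 := by
  rw [walkS, Finset.sum_filter]
  simp [vstep]

lemma walkS_snoc (n : ℕ) (y : Fin n → Bool) (b : Bool) (j : ℕ) :
    walkS (n + 1) (Fin.snoc y b) j = walkS n y j + if n < j then vstep b else 0 := by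
  rw [walkS_eq, walkS_eq, Fin.sum_univ_castSucc]
  simp [Fin.snoc_castSucc, Fin.snoc_last]

lemma walkS_stable (n : ℕ) (y : Fin n → Bool) {j : ℕ} (h : n ≤ j) :
    walkS n y j = walkS n y n := by
  rw [walkS_eq, walkS_eq]
  refine Finset.sum_congr rfl fun i _ => ?_
  have : (i : ℕ) < n := i.isLt
  rw [if_pos (lt_of_lt_of_le this h), if_pos this]

lemma sup'_range_succ (f : ℕ → ℤ) (n : ℕ) :
    (Finset.range (n + 2)).sup' Finset.nonempty_range_add_one f =
      max (f (n + 1)) ((Finset.range (n + 1)).sup' Finset.nonempty_range_add_one f) := by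
  apply le_antisymm
  · apply Finset.sup'_le
    intro j hj
    rw [Finset.mem_range] at hj
    rcases Nat.lt_or_ge j (n + 1) with h | h
    · exact le_trans (Finset.le_sup' f (Finset.mem_range.mpr h)) (le_max_right _ _)
    · have : j = n + 1 := by omega
      subst this; exact le_max_left _ _
  · apply max_le
    · exact Finset.le_sup' f (Finset.mem_range.mpr (by omega))
    · apply Finset.sup'_le
      intro j hj
      rw [Finset.mem_range] at hj
      exact Finset.le_sup' f (Finset.mem_range.mpr (by omega))

lemma walkM_snoc (n : ℕ) (y : Fin n → Bool) (b : Bool) :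
    walkM (n + 1) (Fin.snoc y b) = max (walkS n y n + vstep b) (walkM n y) := by
  rw [walkM, sup'_range_succ]
  congr 1
  · rw [walkS_snoc, if_pos (by omega), walkS_stable n y (by omega)]
  · rw [walkM]
    apply Finset.sup'_congr _ rfl
    intro j hj
    rw [Finset.mem_range] at hj
    rw [walkS_snoc, if_neg (by omega), add_zero]

def Tv (n : ℕ) (x : Fin n → Bool) : ℤ := max 1 (walkM n x) - walkS n x n

lemma walkS_le_walkM (n : ℕ) (x : Fin n → Bool) : walkS n x n ≤ walkM n x := by
  rw [walkM]
  exact Finset.le_sup' _ (Finset.self_mem_range_succ n)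

lemma Tv_nonneg (n : ℕ) (x : Fin n → Bool) : 0 ≤ Tv n x := by
  have h1 := walkS_le_walkM n x
  have h2 : walkM n x ≤ max 1 (walkM n x) := le_max_right _ _
  rw [Tv]; omega

lemma Tv_snoc (n : ℕ) (y : Fin n → Bool) (b : Bool) :
    Tv (n + 1) (Fin.snoc y b) = if b then max (Tv n y - 1) 0 else Tv n y + 1 := by
  have hM := walkM_snoc n y b
  have hS : walkS (n + 1) (Fin.snoc y b) (n + 1) = walkS n y n + vstep b := by
    rw [walkS_snoc, if_pos (by omega), walkS_stable n y (by omega)]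
  have h1 := walkS_le_walkM n y
  rw [Tv, hM, hS, Tv]
  rcases b with _ | _ <;> simp [vstep] <;> omega

end WtAux

namespace WtAux


lemma card_snoc (n : ℕ) (y : Fin n → Bool) (b : Bool) :
    (Finset.univ.filter (fun i => (Fin.snoc y b : Fin (n + 1) → Bool) i = true)).card =
      (Finset.univ.filter (fun i => y i = true)).card + (if b then 1 else 0) := by
  rw [Finset.card_filter, Finset.card_filter, Fin.sum_univ_castSucc]
  simp [Fin.snoc_castSucc, Fin.snoc_last]

lemma card_le (n : ℕ) (y : Fin n → Bool) :
    (Finset.univ.filter (fun i => y i = true)).card ≤ n := by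
  simpa using Finset.card_filter_le Finset.univ (fun i => y i = true)

lemma pathProb_snoc_true (p : ℝ) (n : ℕ) (y : Fin n → Bool) :
    pathProb p (n + 1) (Fin.snoc y true) = p * pathProb p n y := by
  have hc := card_snoc n y true
  have hle := card_le n y
  rw [if_pos rfl] at hc
  rw [pathProb, pathProb, hc, show n + 1 - ((Finset.univ.filter (fun i => y i = true)).card + 1)
      = n - (Finset.univ.filter (fun i => y i = true)).card by omega]
  ring

lemma pathProb_snoc_false (p : ℝ) (n : ℕ) (y : Fin n → Bool) :
    pathProb p (n + 1) (Fin.snoc y false) = (1 - p) * pathProb p n y := by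
  have hc := card_snoc n y false
  have hle := card_le n y
  rw [if_neg (by simp)] at hc
  rw [pathProb, pathProb, hc, add_zero, show n + 1 - (Finset.univ.filter
      (fun i => y i = true)).card = (n - (Finset.univ.filter (fun i => y i = true)).card) + 1
      by omega]
  ring

def snocEquivBool (n : ℕ) : (Fin n → Bool) × Bool ≃ (Fin (n + 1) → Bool) where
  toFun yb := Fin.snoc yb.1 yb.2
  invFun x := (Fin.init x, x (Fin.last n))
  left_inv yb := by simp [Fin.init_snoc, Fin.snoc_last]
  right_inv x := by simp [Fin.snoc_init_self]

open Classical in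
lemma walkProb_succ (p : ℝ) (n : ℕ) (E : Set (Fin (n + 1) → Bool)) :
    walkProb p (n + 1) E =
      p * walkProb p n {y | Fin.snoc y true ∈ E} +
        (1 - p) * walkProb p n {y | Fin.snoc y false ∈ E} := by
  rw [walkProb]
  rw [← Equiv.sum_comp (snocEquivBool n) (fun x => if x ∈ E then pathProb p (n + 1) x else 0)]
  rw [Fintype.sum_prod_type]
  have key : ∀ y : Fin n → Bool,
      (∑ b : Bool, if (snocEquivBool n) (y, b) ∈ E
          then pathProb p (n + 1) ((snocEquivBool n) (y, b)) else 0) =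
        p * (if Fin.snoc y true ∈ E then pathProb p n y else 0) +
          (1 - p) * (if Fin.snoc y false ∈ E then pathProb p n y else 0) := by
    intro y
    rw [Fintype.sum_bool]
    simp only [snocEquivBool, Equiv.coe_fn_mk, pathProb_snoc_true, pathProb_snoc_false]
    by_cases h1 : Fin.snoc y true ∈ E <;> by_cases h2 : Fin.snoc y false ∈ E <;>
      simp [h1, h2]
  rw [Finset.sum_congr rfl (fun y _ => key y), Finset.sum_add_distrib,
    ← Finset.mul_sum, ← Finset.mul_sum, walkProb, walkProb]
  simp only [Set.mem_setOf_eq]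

noncomputable def g (p : ℝ) (n k : ℕ) : ℝ :=
  walkProb p n {x | max 1 (walkM n x) - walkS n x n ≤ (k : ℤ)}

lemma g_eq_Tv (p : ℝ) (n k : ℕ) : g p n k = walkProb p n {x | Tv n x ≤ (k : ℤ)} := rfl

lemma g_succ (p : ℝ) (n k : ℕ) (hk : 1 ≤ k) :
    g p (n + 1) k = p * g p n (k + 1) + (1 - p) * g p n (k - 1) := by
  rw [g_eq_Tv, g_eq_Tv, g_eq_Tv, walkProb_succ]
  have h1 : {y : Fin n → Bool | Fin.snoc y true ∈ {x | Tv (n + 1) x ≤ (k : ℤ)}} =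
      {y | Tv n y ≤ ((k + 1 : ℕ) : ℤ)} := by
    ext y
    simp only [Set.mem_setOf_eq, Tv_snoc, if_true]
    have := Tv_nonneg n y
    push_cast
    omega
  have h2 : {y : Fin n → Bool | Fin.snoc y false ∈ {x | Tv (n + 1) x ≤ (k : ℤ)}} =
      {y | Tv n y ≤ ((k - 1 : ℕ) : ℤ)} := by
    ext y
    simp only [Set.mem_setOf_eq, Tv_snoc, Bool.false_eq_true, if_false]
    have := Tv_nonneg n y
    have hcast : ((k - 1 : ℕ) : ℤ) = (k : ℤ) - 1 := by push_cast [hk]; ring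
    omega
  rw [h1, h2]

lemma g_succ_zero (p : ℝ) (n : ℕ) : g p (n + 1) 0 = p * g p n 1 := by
  rw [g_eq_Tv, g_eq_Tv, walkProb_succ]
  have h1 : {y : Fin n → Bool | Fin.snoc y true ∈ {x | Tv (n + 1) x ≤ ((0 : ℕ) : ℤ)}} =
      {y | Tv n y ≤ ((1 : ℕ) : ℤ)} := by
    ext y
    simp only [Set.mem_setOf_eq, Tv_snoc, if_true]
    have := Tv_nonneg n y
    push_cast
    omega
  have h2 : {y : Fin n → Bool | Fin.snoc y false ∈ {x | Tv (n + 1) x ≤ ((0 : ℕ) : ℤ)}} = ∅ := by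
    ext y
    simp only [Set.mem_setOf_eq, Tv_snoc, Bool.false_eq_true, if_false,
      Set.mem_empty_iff_false, iff_false]
    have := Tv_nonneg n y
    push_cast
    omega
  have h3 : walkProb p n (∅ : Set (Fin n → Bool)) = 0 := by
    rw [walkProb]; simp
  rw [h1, h2, h3, mul_zero, add_zero]

lemma g_zero (p : ℝ) (k : ℕ) : g p 0 k = if 1 ≤ k then 1 else 0 := by
  rw [g_eq_Tv, walkProb]
  have hT : ∀ x : Fin 0 → Bool, Tv 0 x = 1 := by
    intro x
    rw [Tv, walkM]
    simp [walkS]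
  rw [Fintype.sum_subsingleton _ (fun i : Fin 0 => Fin.elim0 i)]
  have hp : pathProb p 0 (fun i : Fin 0 => Fin.elim0 i) = 1 := by
    rw [pathProb]
    simp
  rw [hp, Set.mem_setOf_eq, hT]
  by_cases h : 1 ≤ k
  · rw [if_pos (show (1:ℤ) ≤ ((k:ℕ):ℤ) by exact_mod_cast h), if_pos h]
  · rw [if_neg h, if_neg (show ¬((1:ℤ) ≤ ((k:ℕ):ℤ)) by exact_mod_cast h)]

end WtAux

namespace WtAux

def Ac (n k u : ℕ) : ℤ :=
  if n + 1 ≤ 2 * u + k then (n.choose u : ℤ) - (n.choose (u + k + 1) : ℤ) else 0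

lemma Ac_eq_zero (n k u : ℕ) (h : n < u) : Ac n k u = 0 := by
  rw [Ac]
  split_ifs with hc
  · rw [Nat.choose_eq_zero_of_lt h, Nat.choose_eq_zero_of_lt (by omega)]
    simp
  · rfl

lemma Ac_succ (n k u : ℕ) : Ac (n + 1) (k + 1) (u + 1) = Ac n (k + 2) u + Ac n k (u + 1) := by
  rw [Ac, Ac, Ac]
  by_cases hc : n + 2 ≤ 2 * (u + 1) + (k + 1)
  · rw [if_pos hc, if_pos (by omega), if_pos (by omega)]
    have p1 : (n + 1).choose (u + 1) = n.choose u + n.choose (u + 1) := Nat.choose_succ_succ n u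
    have p2 : (n + 1).choose (u + 1 + (k + 1) + 1) = n.choose (u + k + 2) + n.choose (u + k + 3) := by
      rw [show u + 1 + (k + 1) + 1 = (u + k + 2) + 1 by omega]
      exact Nat.choose_succ_succ n (u + k + 2)
    rw [p1, p2, show u + (k + 2) + 1 = u + k + 3 by omega, show u + 1 + k + 1 = u + k + 2 by omega]
    push_cast
    ring
  · rw [if_neg hc, if_neg (by omega), if_neg (by omega)]
    ring

lemma Ac_succ_zero (n k : ℕ) : Ac (n + 1) (k + 1) 0 = Ac n k 0 := by
  rw [Ac, Ac]
  by_cases hc : n + 2 ≤ 2 * 0 + (k + 1)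
  · rw [if_pos hc, if_pos (by omega)]
    rw [Nat.choose_eq_zero_of_lt (show n + 1 < 0 + (k + 1) + 1 by omega),
      Nat.choose_eq_zero_of_lt (show n < 0 + k + 1 by omega)]
    simp
  · rw [if_neg hc, if_neg (by omega)]

lemma Ac_zero_succ (n u : ℕ) : Ac (n + 1) 0 (u + 1) = Ac n 1 u := by
  rw [Ac, Ac]
  by_cases hc : n + 2 ≤ 2 * (u + 1) + 0
  · rw [if_pos hc, if_pos (by omega)]
    have p1 : (n + 1).choose (u + 1) = n.choose u + n.choose (u + 1) := Nat.choose_succ_succ n u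
    have p2 : (n + 1).choose (u + 1 + 0 + 1) = n.choose (u + 1) + n.choose (u + 2) := by
      rw [show u + 1 + 0 + 1 = (u + 1) + 1 by omega]
      exact Nat.choose_succ_succ n (u + 1)
    rw [p1, p2, show u + 1 + 1 = u + 2 by omega]
    push_cast
    ring
  · rw [if_neg hc, if_neg (by omega)]

lemma Ac_zero_zero (n : ℕ) : Ac (n + 1) 0 0 = 0 := by
  rw [Ac, if_neg (by omega)]

lemma g_closed (p : ℝ) (n k : ℕ) :
    g p n k = ∑ u ∈ Finset.range (n + 1), (Ac n k u : ℝ) * p ^ u * (1 - p) ^ (n - u) := by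
  induction n generalizing k with
  | zero =>
    rw [g_zero, Finset.sum_range_one, Ac]
    by_cases h : 1 ≤ k
    · rw [if_pos h, if_pos (show 0 + 1 ≤ 2 * 0 + k by omega),
        Nat.choose_eq_zero_of_lt (show 0 < 0 + k + 1 by omega)]
      simp
    · rw [if_neg h, if_neg (show ¬(0 + 1 ≤ 2 * 0 + k) by omega)]
      simp
  | succ n ih =>
    have hext : ∀ k', ∑ u ∈ Finset.range (n + 2), (Ac n k' u : ℝ) * p ^ u * (1 - p) ^ (n + 1 - u)
        = ∑ u ∈ Finset.range (n + 1), (Ac n k' u : ℝ) * p ^ u * (1 - p) ^ (n + 1 - u) := by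
      intro k'
      rw [show n + 2 = (n + 1) + 1 from rfl, Finset.sum_range_succ,
        Ac_eq_zero n k' (n + 1) (by omega)]
      simp
    have hq : ∀ k', (1 - p) * (∑ u ∈ Finset.range (n + 1), (Ac n k' u : ℝ) * p ^ u *
          (1 - p) ^ (n - u))
        = (∑ u ∈ Finset.range (n + 1), (Ac n k' (u + 1) : ℝ) * p ^ (u + 1) * (1 - p) ^ (n - u))
          + (Ac n k' 0 : ℝ) * (1 - p) ^ (n + 1) := by
      intro k'
      rw [Finset.mul_sum]
      have h1 : ∀ u ∈ Finset.range (n + 1), (1 - p) * ((Ac n k' u : ℝ) * p ^ u * (1 - p) ^ (n - u))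
          = (Ac n k' u : ℝ) * p ^ u * (1 - p) ^ (n + 1 - u) := by
        intro u hu
        rw [Finset.mem_range] at hu
        rw [show n + 1 - u = (n - u) + 1 by omega]
        ring
      rw [Finset.sum_congr rfl h1, ← hext k',
        Finset.sum_range_succ' (fun u => (Ac n k' u : ℝ) * p ^ u * (1 - p) ^ (n + 1 - u)) (n + 1)]
      simp only [Nat.succ_sub_succ, pow_zero, Nat.sub_zero, mul_one]
    have hp : ∀ k', p * (∑ u ∈ Finset.range (n + 1), (Ac n k' u : ℝ) * p ^ u * (1 - p) ^ (n - u))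
        = ∑ u ∈ Finset.range (n + 1), (Ac n k' u : ℝ) * p ^ (u + 1) * (1 - p) ^ (n - u) := by
      intro k'
      rw [Finset.mul_sum]
      refine Finset.sum_congr rfl fun u hu => ?_
      ring
    rcases k with _ | k
    · rw [g_succ_zero, ih 1, hp 1,
        Finset.sum_range_succ' (fun u => (Ac (n + 1) 0 u : ℝ) * p ^ u * (1 - p) ^ (n + 1 - u))
          (n + 1), Ac_zero_zero]
      simp only [Ac_zero_succ, Nat.succ_sub_succ, Int.cast_zero, pow_zero, Nat.sub_zero,
        mul_one, zero_mul, add_zero]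
    · rw [g_succ p n (k + 1) (by omega)]
      simp only [Nat.add_sub_cancel]
      rw [ih (k + 2), ih k, hp (k + 2), hq k,
        Finset.sum_range_succ' (fun u => (Ac (n + 1) (k + 1) u : ℝ) * p ^ u * (1 - p) ^ (n + 1 - u))
          (n + 1), Ac_succ_zero]
      simp only [Ac_succ, Nat.succ_sub_succ, pow_zero, Nat.sub_zero, mul_one]
      have hsum : ∑ x ∈ Finset.range (n + 1),
          ((Ac n (k + 2) x + Ac n k (x + 1) : ℤ) : ℝ) * p ^ (x + 1) * (1 - p) ^ (n - x)
          = (∑ x ∈ Finset.range (n + 1), (Ac n (k + 2) x : ℝ) * p ^ (x + 1) * (1 - p) ^ (n - x))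
            + ∑ x ∈ Finset.range (n + 1), (Ac n k (x + 1) : ℝ) * p ^ (x + 1) * (1 - p) ^ (n - x) := by
        rw [← Finset.sum_add_distrib]
        refine Finset.sum_congr rfl fun u hu => ?_
        push_cast
        ring
      rw [hsum]
      ring

end WtAux

namespace WtAux

/-- combined coefficient for `p·S k1 + (1-p)·S k2 - S k3`. -/
def Fc (N k1 k2 k3 : ℕ) : ℕ → ℤ
  | 0 => Ac N k2 0 - Ac N k3 0
  | (v + 1) => Ac N k1 v + Ac N k2 (v + 1) - Ac N k3 v - Ac N k3 (v + 1)

/-- combined coefficient for `p·S 1 - S 0`. -/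
def Fc0 (N : ℕ) : ℕ → ℤ
  | 0 => -Ac N 0 0
  | (v + 1) => Ac N 1 v - Ac N 0 v - Ac N 0 (v + 1)

lemma comb (p : ℝ) (N k1 k2 k3 : ℕ) (c : ℤ) (u₀ : ℕ) (hu₀ : u₀ ≤ N + 1)
    (hvan : ∀ u, u ≤ N + 1 → u ≠ u₀ → Fc N k1 k2 k3 u = 0)
    (hval : Fc N k1 k2 k3 u₀ = c) :
    p * (∑ u ∈ Finset.range (N + 1), (Ac N k1 u : ℝ) * p ^ u * (1 - p) ^ (N - u))
      + (1 - p) * (∑ u ∈ Finset.range (N + 1), (Ac N k2 u : ℝ) * p ^ u * (1 - p) ^ (N - u))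
      - (p * (∑ u ∈ Finset.range (N + 1), (Ac N k3 u : ℝ) * p ^ u * (1 - p) ^ (N - u))
         + (1 - p) * (∑ u ∈ Finset.range (N + 1), (Ac N k3 u : ℝ) * p ^ u * (1 - p) ^ (N - u)))
      = (c : ℝ) * p ^ u₀ * (1 - p) ^ (N + 1 - u₀) := by
  have hT : ∑ u ∈ Finset.range (N + 2), (Fc N k1 k2 k3 u : ℝ) * p ^ u * (1 - p) ^ (N + 1 - u)
      = (c : ℝ) * p ^ u₀ * (1 - p) ^ (N + 1 - u₀) := by
    rw [Finset.sum_eq_single u₀]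
    · rw [hval]
    · intro u hu hne
      rw [Finset.mem_range] at hu
      rw [hvan u (by omega) hne]
      simp
    · intro h
      exact absurd (Finset.mem_range.mpr (by omega)) h
  rw [← hT]
  have hmul : ∀ kk : ℕ, (1 - p) * (∑ u ∈ Finset.range (N + 1),
        (Ac N kk u : ℝ) * p ^ u * (1 - p) ^ (N - u))
      = ∑ u ∈ Finset.range (N + 1), (Ac N kk (u + 1) : ℝ) * p ^ (u + 1) * (1 - p) ^ (N - u)
        + (Ac N kk 0 : ℝ) * (1 - p) ^ (N + 1) := by
    intro kk
    rw [Finset.mul_sum]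
    have h1 : ∀ u ∈ Finset.range (N + 1), (1 - p) * ((Ac N kk u : ℝ) * p ^ u * (1 - p) ^ (N - u))
        = (Ac N kk u : ℝ) * p ^ u * (1 - p) ^ (N + 1 - u) := by
      intro u hu
      rw [Finset.mem_range] at hu
      rw [show N + 1 - u = (N - u) + 1 by omega]
      ring
    have hext : ∑ u ∈ Finset.range (N + 2), (Ac N kk u : ℝ) * p ^ u * (1 - p) ^ (N + 1 - u)
        = ∑ u ∈ Finset.range (N + 1), (Ac N kk u : ℝ) * p ^ u * (1 - p) ^ (N + 1 - u) := by
      rw [show N + 2 = (N + 1) + 1 from rfl, Finset.sum_range_succ,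
        Ac_eq_zero N kk (N + 1) (by omega)]
      simp
    rw [Finset.sum_congr rfl h1, ← hext,
      Finset.sum_range_succ' (fun u => (Ac N kk u : ℝ) * p ^ u * (1 - p) ^ (N + 1 - u)) (N + 1)]
    simp only [Nat.succ_sub_succ, pow_zero, Nat.sub_zero, mul_one]
  have hmulp : ∀ kk : ℕ, p * (∑ u ∈ Finset.range (N + 1),
        (Ac N kk u : ℝ) * p ^ u * (1 - p) ^ (N - u))
      = ∑ u ∈ Finset.range (N + 1), (Ac N kk u : ℝ) * p ^ (u + 1) * (1 - p) ^ (N - u) := by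
    intro kk
    rw [Finset.mul_sum]
    exact Finset.sum_congr rfl fun u hu => by ring
  rw [hmulp k1, hmulp k3, hmul k2, hmul k3,
    Finset.sum_range_succ' (fun u => (Fc N k1 k2 k3 u : ℝ) * p ^ u * (1 - p) ^ (N + 1 - u)) (N + 1)]
  simp only [Fc, Nat.succ_sub_succ, pow_zero, Nat.sub_zero, mul_one]
  push_cast
  have hsplit : ∑ x ∈ Finset.range (N + 1),
      ((Ac N k1 x : ℝ) + (Ac N k2 (x + 1) : ℝ) - (Ac N k3 x : ℝ) - (Ac N k3 (x + 1) : ℝ))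
        * p ^ (x + 1) * (1 - p) ^ (N - x)
      = ((∑ x ∈ Finset.range (N + 1), (Ac N k1 x : ℝ) * p ^ (x + 1) * (1 - p) ^ (N - x))
        + ∑ x ∈ Finset.range (N + 1), (Ac N k2 (x + 1) : ℝ) * p ^ (x + 1) * (1 - p) ^ (N - x))
        - (∑ x ∈ Finset.range (N + 1), (Ac N k3 x : ℝ) * p ^ (x + 1) * (1 - p) ^ (N - x))
        - ∑ x ∈ Finset.range (N + 1), (Ac N k3 (x + 1) : ℝ) * p ^ (x + 1) * (1 - p) ^ (N - x) := by
    simp only [sub_mul, add_mul]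
    rw [Finset.sum_sub_distrib, Finset.sum_sub_distrib, Finset.sum_add_distrib]
  rw [hsplit]
  ring

lemma comb0 (p : ℝ) (N : ℕ) (c : ℤ) (u₀ : ℕ) (hu₀ : u₀ ≤ N + 1)
    (hvan : ∀ u, u ≤ N + 1 → u ≠ u₀ → Fc0 N u = 0)
    (hval : Fc0 N u₀ = c) :
    p * (∑ u ∈ Finset.range (N + 1), (Ac N 1 u : ℝ) * p ^ u * (1 - p) ^ (N - u))
      - (p * (∑ u ∈ Finset.range (N + 1), (Ac N 0 u : ℝ) * p ^ u * (1 - p) ^ (N - u))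
         + (1 - p) * (∑ u ∈ Finset.range (N + 1), (Ac N 0 u : ℝ) * p ^ u * (1 - p) ^ (N - u)))
      = (c : ℝ) * p ^ u₀ * (1 - p) ^ (N + 1 - u₀) := by
  have hT : ∑ u ∈ Finset.range (N + 2), (Fc0 N u : ℝ) * p ^ u * (1 - p) ^ (N + 1 - u)
      = (c : ℝ) * p ^ u₀ * (1 - p) ^ (N + 1 - u₀) := by
    rw [Finset.sum_eq_single u₀]
    · rw [hval]
    · intro u hu hne
      rw [Finset.mem_range] at hu
      rw [hvan u (by omega) hne]
      simp
    · intro h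
      exact absurd (Finset.mem_range.mpr (by omega)) h
  rw [← hT]
  have hmul : ∀ kk : ℕ, (1 - p) * (∑ u ∈ Finset.range (N + 1),
        (Ac N kk u : ℝ) * p ^ u * (1 - p) ^ (N - u))
      = ∑ u ∈ Finset.range (N + 1), (Ac N kk (u + 1) : ℝ) * p ^ (u + 1) * (1 - p) ^ (N - u)
        + (Ac N kk 0 : ℝ) * (1 - p) ^ (N + 1) := by
    intro kk
    rw [Finset.mul_sum]
    have h1 : ∀ u ∈ Finset.range (N + 1), (1 - p) * ((Ac N kk u : ℝ) * p ^ u * (1 - p) ^ (N - u))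
        = (Ac N kk u : ℝ) * p ^ u * (1 - p) ^ (N + 1 - u) := by
      intro u hu
      rw [Finset.mem_range] at hu
      rw [show N + 1 - u = (N - u) + 1 by omega]
      ring
    have hext : ∑ u ∈ Finset.range (N + 2), (Ac N kk u : ℝ) * p ^ u * (1 - p) ^ (N + 1 - u)
        = ∑ u ∈ Finset.range (N + 1), (Ac N kk u : ℝ) * p ^ u * (1 - p) ^ (N + 1 - u) := by
      rw [show N + 2 = (N + 1) + 1 from rfl, Finset.sum_range_succ,
        Ac_eq_zero N kk (N + 1) (by omega)]
      simp
    rw [Finset.sum_congr rfl h1, ← hext,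
      Finset.sum_range_succ' (fun u => (Ac N kk u : ℝ) * p ^ u * (1 - p) ^ (N + 1 - u)) (N + 1)]
    simp only [Nat.succ_sub_succ, pow_zero, Nat.sub_zero, mul_one]
  have hmulp : ∀ kk : ℕ, p * (∑ u ∈ Finset.range (N + 1),
        (Ac N kk u : ℝ) * p ^ u * (1 - p) ^ (N - u))
      = ∑ u ∈ Finset.range (N + 1), (Ac N kk u : ℝ) * p ^ (u + 1) * (1 - p) ^ (N - u) := by
    intro kk
    rw [Finset.mul_sum]
    exact Finset.sum_congr rfl fun u hu => by ring
  rw [hmulp 1, hmulp 0, hmul 0,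
    Finset.sum_range_succ' (fun u => (Fc0 N u : ℝ) * p ^ u * (1 - p) ^ (N + 1 - u)) (N + 1)]
  simp only [Fc0, Nat.succ_sub_succ, pow_zero, Nat.sub_zero, mul_one]
  push_cast
  have hsplit : ∑ x ∈ Finset.range (N + 1),
      ((Ac N 1 x : ℝ) - (Ac N 0 x : ℝ) - (Ac N 0 (x + 1) : ℝ)) * p ^ (x + 1) * (1 - p) ^ (N - x)
      = ((∑ x ∈ Finset.range (N + 1), (Ac N 1 x : ℝ) * p ^ (x + 1) * (1 - p) ^ (N - x))
        - ∑ x ∈ Finset.range (N + 1), (Ac N 0 x : ℝ) * p ^ (x + 1) * (1 - p) ^ (N - x))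
        - ∑ x ∈ Finset.range (N + 1), (Ac N 0 (x + 1) : ℝ) * p ^ (x + 1) * (1 - p) ^ (N - x) := by
    simp only [sub_mul]
    rw [Finset.sum_sub_distrib, Finset.sum_sub_distrib]
  rw [hsplit]
  ring

end WtAux

namespace WtAux

lemma choose_symm_w (w a b : ℕ) (hab : a + b = 2 * w + 2) (hb : b ≤ 2 * w + 2) :
    ((2 * w + 2).choose a : ℤ) = (2 * w + 2).choose b := by
  rw [show a = 2 * w + 2 - b by omega, Nat.choose_symm hb]

lemma bracket0 (p : ℝ) (w : ℕ) :
    p * (∑ u ∈ Finset.range (2 * w + 2 + 1),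
        (Ac (2 * w + 2) 1 u : ℝ) * p ^ u * (1 - p) ^ (2 * w + 2 - u))
      - (p * (∑ u ∈ Finset.range (2 * w + 2 + 1),
          (Ac (2 * w + 2) 0 u : ℝ) * p ^ u * (1 - p) ^ (2 * w + 2 - u))
        + (1 - p) * (∑ u ∈ Finset.range (2 * w + 2 + 1),
          (Ac (2 * w + 2) 0 u : ℝ) * p ^ u * (1 - p) ^ (2 * w + 2 - u)))
      = ((((2 * w + 2).choose (w + 1) : ℤ) - ((2 * w + 2).choose (w + 2) : ℤ) : ℤ) : ℝ)
        * p ^ (w + 2) * (1 - p) ^ (w + 1) := by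
  have h := comb0 p (2 * w + 2) (((2 * w + 2).choose (w + 1) : ℤ) - (2 * w + 2).choose (w + 2))
    (w + 2) (by omega) ?_ ?_
  · rw [show 2 * w + 2 + 1 - (w + 2) = w + 1 by omega] at h
    exact h
  · intro u hu hne
    rcases u with _ | v
    · simp only [Fc0, Ac]
      rw [if_neg (by omega)]
      ring
    · simp only [Fc0, Ac]
      rw [show v + 1 + 1 = v + 2 by omega, show v + 0 + 1 = v + 1 by omega,
        show v + 1 + 0 + 1 = v + 2 by omega]
      by_cases hv : w + 2 ≤ v
      · rw [if_pos (by omega), if_pos (by omega), if_pos (by omega)]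
        ring
      · rw [if_neg (by omega), if_neg (by omega), if_neg (by omega)]
        ring
  · simp only [Fc0, Ac]
    rw [show w + 1 + 1 + 1 = w + 3 by omega, show w + 1 + 0 + 1 = w + 2 by omega,
      show w + 2 + 0 + 1 = w + 3 by omega]
    rw [if_pos (by omega), if_neg (by omega), if_pos (by omega)]
    ring

end WtAux

namespace WtAux

lemma bracket1 (p : ℝ) (w : ℕ) :
    p * (∑ u ∈ Finset.range (2 * w + 2 + 1),
        (Ac (2 * w + 2) 2 u : ℝ) * p ^ u * (1 - p) ^ (2 * w + 2 - u))
      + (1 - p) * (∑ u ∈ Finset.range (2 * w + 2 + 1),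
        (Ac (2 * w + 2) 0 u : ℝ) * p ^ u * (1 - p) ^ (2 * w + 2 - u))
      - (p * (∑ u ∈ Finset.range (2 * w + 2 + 1),
          (Ac (2 * w + 2) 1 u : ℝ) * p ^ u * (1 - p) ^ (2 * w + 2 - u))
        + (1 - p) * (∑ u ∈ Finset.range (2 * w + 2 + 1),
          (Ac (2 * w + 2) 1 u : ℝ) * p ^ u * (1 - p) ^ (2 * w + 2 - u)))
      = ((-(((2 * w + 2).choose (w + 1) : ℤ) - ((2 * w + 2).choose (w + 3) : ℤ)) : ℤ) : ℝ)
        * p ^ (w + 1) * (1 - p) ^ (w + 2) := by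
  have h := comb p (2 * w + 2) 2 0 1
    (-(((2 * w + 2).choose (w + 1) : ℤ) - (2 * w + 2).choose (w + 3)))
    (w + 1) (by omega) ?_ ?_
  · rw [show 2 * w + 2 + 1 - (w + 1) = w + 2 by omega] at h
    exact h
  · intro u hu hne
    rcases u with _ | v
    · simp only [Fc, Ac]
      rw [if_neg (by omega), if_neg (by omega)]
      ring
    · simp only [Fc, Ac]
      rw [show v + 2 + 1 = v + 3 by omega, show v + 1 + 0 + 1 = v + 2 by omega,
        show v + 1 + 1 = v + 2 by omega, show v + 1 + 1 + 1 = v + 3 by omega]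
      by_cases hv : w + 1 ≤ v
      · rw [if_pos (by omega), if_pos (by omega), if_pos (by omega), if_pos (by omega)]
        ring
      · rw [if_neg (by omega), if_neg (by omega), if_neg (by omega), if_neg (by omega)]
        ring
  · simp only [Fc, Ac]
    rw [show w + 2 + 1 = w + 3 by omega, show w + 1 + 0 + 1 = w + 2 by omega,
      show w + 1 + 1 = w + 2 by omega, show w + 1 + 1 + 1 = w + 3 by omega]
    rw [if_neg (by omega), if_neg (by omega), if_neg (by omega), if_pos (by omega)]
    ring

lemma bracket2 (p : ℝ) (w : ℕ) :
    p * (∑ u ∈ Finset.range (2 * w + 2 + 1),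
        (Ac (2 * w + 2) 3 u : ℝ) * p ^ u * (1 - p) ^ (2 * w + 2 - u))
      + (1 - p) * (∑ u ∈ Finset.range (2 * w + 2 + 1),
        (Ac (2 * w + 2) 1 u : ℝ) * p ^ u * (1 - p) ^ (2 * w + 2 - u))
      - (p * (∑ u ∈ Finset.range (2 * w + 2 + 1),
          (Ac (2 * w + 2) 2 u : ℝ) * p ^ u * (1 - p) ^ (2 * w + 2 - u))
        + (1 - p) * (∑ u ∈ Finset.range (2 * w + 2 + 1),
          (Ac (2 * w + 2) 2 u : ℝ) * p ^ u * (1 - p) ^ (2 * w + 2 - u)))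
      = (((((2 * w + 2).choose (w + 2) : ℤ) - ((2 * w + 2).choose (w + 3) : ℤ)) : ℤ) : ℝ)
        * p ^ (w + 1) * (1 - p) ^ (w + 2) := by
  have h := comb p (2 * w + 2) 3 1 2
    (((2 * w + 2).choose (w + 2) : ℤ) - (2 * w + 2).choose (w + 3))
    (w + 1) (by omega) ?_ ?_
  · rw [show 2 * w + 2 + 1 - (w + 1) = w + 2 by omega] at h
    exact h
  · intro u hu hne
    rcases u with _ | v
    · simp only [Fc, Ac]
      rw [if_neg (by omega), if_neg (by omega)]
      ring
    · simp only [Fc, Ac]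
      rw [show v + 3 + 1 = v + 4 by omega, show v + 1 + 1 + 1 = v + 3 by omega,
        show v + 2 + 1 = v + 3 by omega, show v + 1 + 2 + 1 = v + 4 by omega]
      by_cases hv : w + 1 ≤ v
      · rw [if_pos (by omega), if_pos (by omega), if_pos (by omega), if_pos (by omega)]
        ring
      · rw [if_neg (by omega), if_neg (by omega), if_neg (by omega), if_neg (by omega)]
        ring
  · simp only [Fc, Ac]
    rw [show w + 3 + 1 = w + 4 by omega, show w + 1 + 1 + 1 = w + 3 by omega,
      show w + 2 + 1 = w + 3 by omega, show w + 1 + 2 + 1 = w + 4 by omega]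
    rw [if_pos (by omega), if_pos (by omega), if_neg (by omega), if_pos (by omega)]
    rw [choose_symm_w w w (w + 2) (by omega) (by omega)]
    ring

lemma bracket3 (p : ℝ) (w : ℕ) :
    p * (∑ u ∈ Finset.range (2 * w + 2 + 1),
        (Ac (2 * w + 2) 4 u : ℝ) * p ^ u * (1 - p) ^ (2 * w + 2 - u))
      + (1 - p) * (∑ u ∈ Finset.range (2 * w + 2 + 1),
        (Ac (2 * w + 2) 2 u : ℝ) * p ^ u * (1 - p) ^ (2 * w + 2 - u))
      - (p * (∑ u ∈ Finset.range (2 * w + 2 + 1),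
          (Ac (2 * w + 2) 3 u : ℝ) * p ^ u * (1 - p) ^ (2 * w + 2 - u))
        + (1 - p) * (∑ u ∈ Finset.range (2 * w + 2 + 1),
          (Ac (2 * w + 2) 3 u : ℝ) * p ^ u * (1 - p) ^ (2 * w + 2 - u)))
      = ((-(((2 * w + 2).choose (w + 2) : ℤ) - ((2 * w + 2).choose (w + 4) : ℤ)) : ℤ) : ℝ)
        * p ^ w * (1 - p) ^ (w + 3) := by
  have h := comb p (2 * w + 2) 4 2 3
    (-(((2 * w + 2).choose (w + 2) : ℤ) - (2 * w + 2).choose (w + 4)))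
    w (by omega) ?_ ?_
  · rw [show 2 * w + 2 + 1 - w = w + 3 by omega] at h
    exact h
  · intro u hu hne
    rcases u with _ | v
    · simp only [Fc, Ac]
      rw [if_neg (by omega), if_neg (by omega)]
      ring
    · simp only [Fc, Ac]
      rw [show v + 4 + 1 = v + 5 by omega, show v + 1 + 2 + 1 = v + 4 by omega,
        show v + 3 + 1 = v + 4 by omega, show v + 1 + 3 + 1 = v + 5 by omega]
      by_cases hv : w ≤ v
      · rw [if_pos (by omega), if_pos (by omega), if_pos (by omega), if_pos (by omega)]
        ring
      · rw [if_neg (by omega), if_neg (by omega), if_neg (by omega), if_neg (by omega)]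
        ring
  · rcases w with _ | t
    · simp only [Fc, Ac]
      norm_num [Nat.choose]
    · simp only [Fc, Ac]
      rw [show t + 4 + 1 = t + 5 by omega, show t + 1 + 2 + 1 = t + 4 by omega,
        show t + 3 + 1 = t + 4 by omega, show t + 1 + 3 + 1 = t + 5 by omega]
      rw [if_neg (by omega), if_neg (by omega), if_neg (by omega), if_pos (by omega)]
      rw [show t + 1 + 2 = t + 3 by omega, show t + 1 + 4 = t + 5 by omega,
        choose_symm_w (t + 1) (t + 1) (t + 3) (by omega) (by omega)]
      ring

lemma bracket4 (p : ℝ) (w : ℕ) :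
    p * (∑ u ∈ Finset.range (2 * w + 2 + 1),
        (Ac (2 * w + 2) 5 u : ℝ) * p ^ u * (1 - p) ^ (2 * w + 2 - u))
      + (1 - p) * (∑ u ∈ Finset.range (2 * w + 2 + 1),
        (Ac (2 * w + 2) 3 u : ℝ) * p ^ u * (1 - p) ^ (2 * w + 2 - u))
      - (p * (∑ u ∈ Finset.range (2 * w + 2 + 1),
          (Ac (2 * w + 2) 4 u : ℝ) * p ^ u * (1 - p) ^ (2 * w + 2 - u))
        + (1 - p) * (∑ u ∈ Finset.range (2 * w + 2 + 1),
          (Ac (2 * w + 2) 4 u : ℝ) * p ^ u * (1 - p) ^ (2 * w + 2 - u)))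
      = (((((2 * w + 2).choose (w + 3) : ℤ) - ((2 * w + 2).choose (w + 4) : ℤ)) : ℤ) : ℝ)
        * p ^ w * (1 - p) ^ (w + 3) := by
  have h := comb p (2 * w + 2) 5 3 4
    (((2 * w + 2).choose (w + 3) : ℤ) - (2 * w + 2).choose (w + 4))
    w (by omega) ?_ ?_
  · rw [show 2 * w + 2 + 1 - w = w + 3 by omega] at h
    exact h
  · intro u hu hne
    rcases u with _ | v
    · simp only [Fc, Ac]
      rw [if_neg (by omega), if_neg (by omega)]
      ring
    · simp only [Fc, Ac]
      rw [show v + 5 + 1 = v + 6 by omega, show v + 1 + 3 + 1 = v + 5 by omega,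
        show v + 4 + 1 = v + 5 by omega, show v + 1 + 4 + 1 = v + 6 by omega]
      by_cases hv : w ≤ v
      · rw [if_pos (by omega), if_pos (by omega), if_pos (by omega), if_pos (by omega)]
        ring
      · rw [if_neg (by omega), if_neg (by omega), if_neg (by omega), if_neg (by omega)]
        ring
  · rcases w with _ | t
    · simp only [Fc, Ac]
      norm_num [Nat.choose]
    · simp only [Fc, Ac]
      rw [show t + 5 + 1 = t + 6 by omega, show t + 1 + 3 + 1 = t + 5 by omega,
        show t + 4 + 1 = t + 5 by omega, show t + 1 + 4 + 1 = t + 6 by omega]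
      rw [if_pos (by omega), if_pos (by omega), if_neg (by omega), if_pos (by omega)]
      rw [show t + 1 + 3 = t + 4 by omega, show t + 1 + 5 = t + 6 by omega,
        choose_symm_w (t + 1) t (t + 4) (by omega) (by omega)]
      ring

end WtAux

/-- Formula for `W̃_{2m+4}(p) − W̃_{2m+3}(p)`. -/
theorem Wt_even_minus_odd (p : ℝ) (hp : p ∈ Set.Ioo (0 : ℝ) 1) (m : ℕ) (hm : 1 ≤ m) :
    Wt (2 * m + 4) p - Wt (2 * m + 3) p =
      p ^ m * (1 - p) ^ m *
        (dCoef m 0 * p ^ 4 - dCoef m 1 * p ^ 3 * (1 - p) +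
          (dCoef m 0 + 3 * dCoef m 1 + dCoef m 2) * p ^ 2 * (1 - p) ^ 2 -
          (2 * dCoef m 0 + 2 * dCoef m 1 + dCoef m 2) * p * (1 - p) ^ 3 -
          (dCoef m 0 + dCoef m 1) * (1 - p) ^ 4) := by
  obtain ⟨w, rfl⟩ : ∃ w, m = w + 1 := ⟨m - 1, by omega⟩
  have hWt : ∀ n : ℕ, Wt n p = ∑ k ∈ Finset.range 5, WtAux.g p (n - 3) k * deltaPi3 p k :=
    fun n => rfl
  rw [hWt, hWt, show 2 * (w + 1) + 4 - 3 = (2 * w + 2) + 1 by omega,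
    show 2 * (w + 1) + 3 - 3 = 2 * w + 2 by omega]
  simp only [Finset.sum_range_succ, Finset.sum_range_zero, zero_add]
  rw [WtAux.g_succ_zero p (2 * w + 2),
    WtAux.g_succ p (2 * w + 2) 1 (by omega), WtAux.g_succ p (2 * w + 2) 2 (by omega),
    WtAux.g_succ p (2 * w + 2) 3 (by omega), WtAux.g_succ p (2 * w + 2) 4 (by omega)]
  norm_num
  simp only [WtAux.g_closed]
  have hB0 := WtAux.bracket0 p w
  have hB1 := WtAux.bracket1 p w
  have hB2 := WtAux.bracket2 p w
  have hB3 := WtAux.bracket3 p w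
  have hB4 := WtAux.bracket4 p w
  push_cast at hB0 hB1 hB2 hB3 hB4
  simp only [deltaPi3, dCoef]
  rw [show 2 * (w + 1) = 2 * w + 2 by ring, show w + 1 + 0 = w + 1 by ring,
    show w + 1 + 0 + 1 = w + 2 by ring, show w + 1 + 1 + 1 = w + 3 by ring,
    show w + 1 + 1 = w + 2 by ring, show w + 1 + 2 + 1 = w + 4 by ring,
    show w + 1 + 2 = w + 3 by ring]
  linear_combination (p ^ 3) * hB0
    + (-(p ^ 2 * (1 - p)) + 2 * p * (1 - p) ^ 2 + (1 - p) ^ 3) * hB1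
    + (-(p ^ 3) + 2 * p ^ 2 * (1 - p) + p * (1 - p) ^ 2) * hB2
    + (p ^ 2 * (1 - p)) * hB3
    + (p ^ 3) * hB4
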